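/- arXiv:1702.06495 — 2 statements merged into one kernel-verified Lean document; each statement's English description precedes it below -/
import Mathlib

section
/- Let f : ℝ^e → M_{e,d}(ℝ) be bounded and Lipschitz with constant L (both ‖f‖_∞ ≤ L and Lip(f) ≤ L), and let x, x* : [0,T] → ℝ^e be continuous of finite p-variation with x(0) = x*(0). Then for every 0 ≤ u ≤ v ≤ T, assuming f is C¹ with ‖Df‖_∞ ≤ L and Df Lipschitz with constant L, ‖(f∘x)(v) - (f∘x)(u) - (f∘x*)(v) + (f∘x*)(u)‖ ≤ L(‖x - x*‖_{p-var,[u,v]} + 2‖x*‖_{p-var,[u,v]} ‖x - x*‖_{p-var,[0,T]}). -/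
open scoped BigOperators

noncomputable section

/-- `π` is a dissection of the interval `[s,t]`. -/
def IsDissection (s t : ℝ) (π : List ℝ) : Prop :=
  List.Chain' (· < ·) π ∧ π.head? = some s ∧ π.getLast? = some t

/-- The sum `∑ ‖x(t_{k+1}) - x(t_k)‖^p` along a dissection. -/
def varSum (p : ℝ) {E : Type*} [NormedAddCommGroup E] (x : ℝ → E) (π : List ℝ) : ℝ :=
  ((π.zip π.tail).map (fun q => ‖x q.2 - x q.1‖ ^ p)).sum

/-- The `p`-variation seminorm of `x` on `[s,t]`. -/
def pVar (p : ℝ) {E : Type*} [NormedAddCommGroup E] (x : ℝ → E) (s t : ℝ) : ℝ :=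
  sSup {v | ∃ π, IsDissection s t π ∧ v = varSum p x π ^ (1 / p)}

/-- `x` has finite `p`-variation on `[s,t]`. -/
def HasFiniteVar (p : ℝ) {E : Type*} [NormedAddCommGroup E] (x : ℝ → E) (s t : ℝ) : Prop :=
  BddAbove {v | ∃ π, IsDissection s t π ∧ v = varSum p x π ^ (1 / p)}


variable {E : Type*} [NormedAddCommGroup E]

lemma varSum_nonneg (p : ℝ) (x : ℝ → E) (π : List ℝ) : 0 ≤ varSum p x π := by
  apply List.sum_nonneg
  intro a ha
  simp only [List.mem_map] at ha
  obtain ⟨q, _, rfl⟩ := ha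
  exact Real.rpow_nonneg (norm_nonneg _) p

lemma pVar_nonneg (p : ℝ) (x : ℝ → E) (s t : ℝ) : 0 ≤ pVar p x s t := by
  apply Real.sSup_nonneg
  rintro w ⟨π, hπ, rfl⟩
  exact Real.rpow_nonneg (varSum_nonneg p x π) _

lemma varSum_cons_cons (p : ℝ) (x : ℝ → E) (a b : ℝ) (l : List ℝ) :
    varSum p x (a :: b :: l) = ‖x b - x a‖ ^ p + varSum p x (b :: l) := by
  simp [varSum]

lemma varSum_le_cons (p : ℝ) (x : ℝ → E) (a : ℝ) (l : List ℝ) (hl : l ≠ []) :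
    varSum p x l ≤ varSum p x (a :: l) := by
  cases l with
  | nil => simp at hl
  | cons b t =>
    rw [varSum_cons_cons]
    have := Real.rpow_nonneg (norm_nonneg (x b - x a)) p
    linarith

lemma varSum_le_concat (p : ℝ) (x : ℝ → E) (l : List ℝ) (c : ℝ) :
    varSum p x l ≤ varSum p x (l ++ [c]) := by
  induction l with
  | nil => simp [varSum]
  | cons a t ih =>
    cases t with
    | nil =>
      simp only [List.nil_append, List.cons_append]
      have : varSum p x [a] = 0 := by simp [varSum]
      rw [this]
      exact varSum_nonneg p x _
    | cons b t' =>
      simp only [List.cons_append] at *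
      rw [varSum_cons_cons, varSum_cons_cons]
      linarith

variable {E : Type*} [NormedAddCommGroup E]

lemma dissection_extend (p : ℝ) (x : ℝ → E) {a b s t : ℝ}
    (has : a ≤ s) (hst : s ≤ t) (htb : t ≤ b) {π : List ℝ} (hπ : IsDissection s t π) :
    ∃ π', IsDissection a b π' ∧ varSum p x π ≤ varSum p x π' := by
  obtain ⟨hc, hh, hl⟩ := hπ
  have hne : π ≠ [] := by intro hn; rw [hn] at hh; simp at hh
  -- step 1: extend on the right
  have step1 : ∃ π₁, IsDissection s b π₁ ∧ varSum p x π ≤ varSum p x π₁ := by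
    rcases eq_or_lt_of_le htb with rfl | hlt
    · exact ⟨π, ⟨hc, hh, hl⟩, le_refl _⟩
    · refine ⟨π ++ [b], ⟨?_, ?_, List.getLast?_concat (l := π)⟩, varSum_le_concat p x π b⟩
      · refine List.isChain_append.mpr ?_
        refine ⟨hc, List.isChain_singleton b, ?_⟩
        intro y hy z hz
        simp only [List.head?_cons, Option.mem_def, Option.some.injEq] at hz
        rw [hl] at hy
        simp only [Option.mem_def, Option.some.injEq] at hy
        subst hy; subst hz; exact hlt
      · rw [List.head?_append, hh]; rfl
  obtain ⟨π₁, ⟨hc₁, hh₁, hl₁⟩, hv₁⟩ := step1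
  have hne₁ : π₁ ≠ [] := by intro hn; rw [hn] at hh₁; simp at hh₁
  rcases eq_or_lt_of_le has with rfl | hlt
  · exact ⟨π₁, ⟨hc₁, hh₁, hl₁⟩, hv₁⟩
  · refine ⟨a :: π₁, ⟨?_, rfl, ?_⟩, hv₁.trans (varSum_le_cons p x a π₁ hne₁)⟩
    · refine List.isChain_cons.mpr ?_
      refine ⟨?_, hc₁⟩
      intro y hy
      rw [hh₁] at hy
      simp only [Option.mem_def, Option.some.injEq] at hy
      subst hy; exact hlt
    · cases π₁ with
      | nil => exact absurd rfl hne₁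
      | cons y ys => rw [List.getLast?_cons_cons]; exact hl₁

lemma hasFiniteVar_mono {p : ℝ} (hp : 1 ≤ p) (x : ℝ → E) {a b s t : ℝ}
    (has : a ≤ s) (hst : s ≤ t) (htb : t ≤ b)
    (h : HasFiniteVar p x a b) : HasFiniteVar p x s t := by
  obtain ⟨B, hB⟩ := h
  refine ⟨B, ?_⟩
  rintro w ⟨π, hπ, rfl⟩
  obtain ⟨π', hπ', hle⟩ := dissection_extend p x has hst htb hπ
  have h1p : (0:ℝ) ≤ 1 / p := by positivity
  calc varSum p x π ^ (1/p) ≤ varSum p x π' ^ (1/p) :=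
        Real.rpow_le_rpow (varSum_nonneg p x π) hle h1p
    _ ≤ B := hB ⟨π', hπ', rfl⟩

lemma norm_sub_le_pVar {p : ℝ} (hp : 1 ≤ p) (x : ℝ → E) {a b s t : ℝ}
    (has : a ≤ s) (hst : s ≤ t) (htb : t ≤ b)
    (hfin : HasFiniteVar p x a b) : ‖x t - x s‖ ≤ pVar p x a b := by
  have hp0 : (0:ℝ) < p := lt_of_lt_of_le zero_lt_one hp
  have h1p : (0:ℝ) ≤ 1 / p := by positivity
  rcases eq_or_lt_of_le hst with rfl | h
  · simpa using pVar_nonneg p x a b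
  · have hd : IsDissection s t [s, t] := ⟨List.isChain_pair.mpr h, rfl, rfl⟩
    obtain ⟨π', hπ', hle⟩ := dissection_extend p x has hst htb hd
    have hv : varSum p x [s, t] = ‖x t - x s‖ ^ p := by simp [varSum]
    have key : ‖x t - x s‖ = (varSum p x [s, t]) ^ (1/p) := by
      rw [hv, ← Real.rpow_mul (norm_nonneg _), mul_one_div_cancel hp0.ne', Real.rpow_one]
    rw [key]
    calc (varSum p x [s, t]) ^ (1/p) ≤ (varSum p x π') ^ (1/p) :=
          Real.rpow_le_rpow (varSum_nonneg p x _) hle h1p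
      _ ≤ pVar p x a b := le_csSup hfin ⟨π', hπ', rfl⟩

lemma list_map_sum_eq {α : Type*} (l : List α) (h : α → ℝ) :
    (l.map h).sum = ∑ i : Fin l.length, h (l.get i) := by
  conv_lhs => rw [← List.ofFn_get l]
  rw [List.map_ofFn, List.sum_ofFn]
  rfl

lemma hasFiniteVar_sub {p : ℝ} (hp : 1 ≤ p) {x y : ℝ → E} {s t : ℝ}
    (hx : HasFiniteVar p x s t) (hy : HasFiniteVar p y s t) :
    HasFiniteVar p (fun r => x r - y r) s t := by
  obtain ⟨Bx, hBx⟩ := hx; obtain ⟨By, hBy⟩ := hy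
  refine ⟨Bx + By, ?_⟩
  rintro w ⟨π, hπ, rfl⟩
  have h1p : (0:ℝ) ≤ 1/p := by positivity
  set m := π.zip π.tail with hm
  set F : Fin m.length → ℝ := fun i => ‖x (m.get i).2 - x (m.get i).1‖ with hF
  set G : Fin m.length → ℝ := fun i => ‖y (m.get i).2 - y (m.get i).1‖ with hG
  have hsum : varSum p (fun r => x r - y r) π ≤ ∑ i : Fin m.length, |F i + G i| ^ p := by
    rw [varSum, list_map_sum_eq]
    apply Finset.sum_le_sum
    intro i _
    apply Real.rpow_le_rpow (norm_nonneg _) ?_ (le_of_lt (lt_of_lt_of_le zero_lt_one hp))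
    rw [abs_of_nonneg (by positivity)]
    have heq : (x (m.get i).2 - y (m.get i).2) - (x (m.get i).1 - y (m.get i).1)
         = (x (m.get i).2 - x (m.get i).1) - (y (m.get i).2 - y (m.get i).1) := by abel
    simp only [heq, hF, hG]
    exact (norm_sub_le (x (m.get i).2 - x (m.get i).1) (y (m.get i).2 - y (m.get i).1)).trans_eq' (congrArg norm heq.symm)
  have hFx : ∑ i : Fin m.length, |F i| ^ p = varSum p x π := by
    rw [varSum, list_map_sum_eq]
    exact Finset.sum_congr rfl fun i _ => by rw [abs_of_nonneg (norm_nonneg _)]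
  have hGy : ∑ i : Fin m.length, |G i| ^ p = varSum p y π := by
    rw [varSum, list_map_sum_eq]
    exact Finset.sum_congr rfl fun i _ => by rw [abs_of_nonneg (norm_nonneg _)]
  have key : varSum p (fun r => x r - y r) π ^ (1/p)
      ≤ varSum p x π ^ (1/p) + varSum p y π ^ (1/p) := by
    calc varSum p (fun r => x r - y r) π ^ (1/p)
        ≤ (∑ i : Fin m.length, |F i + G i| ^ p) ^ (1/p) :=
          Real.rpow_le_rpow (varSum_nonneg _ _ _) hsum h1p
      _ ≤ (∑ i : Fin m.length, |F i| ^ p) ^ (1/p)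
          + (∑ i : Fin m.length, |G i| ^ p) ^ (1/p) := Real.Lp_add_le Finset.univ F G hp
      _ = varSum p x π ^ (1/p) + varSum p y π ^ (1/p) := by rw [hFx, hGy]
  exact key.trans (add_le_add (hBx ⟨π, hπ, rfl⟩) (hBy ⟨π, hπ, rfl⟩))

lemma diff_translate_bound {E' F : Type*} [NormedAddCommGroup E'] [NormedSpace ℝ E']
    [NormedAddCommGroup F] [NormedSpace ℝ F]
    (f : E' → F) (hf : ContDiff ℝ 1 f) {L : ℝ}
    (hDflip : ∀ v w, ‖fderiv ℝ f v - fderiv ℝ f w‖ ≤ L * ‖v - w‖)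
    (c a a' : E') :
    ‖(f (a + c) - f a) - (f (a' + c) - f a')‖ ≤ (L * ‖c‖) * ‖a - a'‖ := by
  have hdiff : Differentiable ℝ f := hf.differentiable one_ne_zero
  set g : E' → F := fun y => f (y + c) - f y with hg
  have hg' : ∀ y : E', HasFDerivAt g (fderiv ℝ f (y + c) - fderiv ℝ f y) y := by
    intro y
    have h1 : HasFDerivAt (fun z : E' => f (z + c)) (fderiv ℝ f (y + c)) y := by
      have h2 := (hdiff (y + c)).hasFDerivAt.comp y ((hasFDerivAt_id y).add_const c)
      exact h2
    exact h1.sub (hdiff y).hasFDerivAt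
  have bound : ∀ y : E', ‖fderiv ℝ f (y + c) - fderiv ℝ f y‖ ≤ L * ‖c‖ := by
    intro y
    have := hDflip (y + c) y
    simpa using this
  have key := Convex.norm_image_sub_le_of_norm_hasFDerivWithin_le
    (f := g) (f' := fun y => fderiv ℝ f (y + c) - fderiv ℝ f y)
    (fun y _ => (hg' y).hasFDerivWithinAt) (fun y _ => bound y)
    convex_univ (Set.mem_univ a') (Set.mem_univ a)
  simpa [hg] using key

theorem composition_difference_estimate
    (d e : ℕ) (T p L : ℝ) (hT : 0 < T) (hp : 1 ≤ p) (hL : 0 ≤ L)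
    (f : EuclideanSpace ℝ (Fin e) → (EuclideanSpace ℝ (Fin d) →L[ℝ] EuclideanSpace ℝ (Fin e)))
    (hf : ContDiff ℝ 1 f)
    (hfb : ∀ v, ‖f v‖ ≤ L)
    (hflip : ∀ v w, ‖f v - f w‖ ≤ L * ‖v - w‖)
    (hDfb : ∀ v, ‖fderiv ℝ f v‖ ≤ L)
    (hDflip : ∀ v w, ‖fderiv ℝ f v - fderiv ℝ f w‖ ≤ L * ‖v - w‖)
    (x xs : ℝ → EuclideanSpace ℝ (Fin e))
    (hx : ContinuousOn x (Set.Icc 0 T)) (hxs : ContinuousOn xs (Set.Icc 0 T))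
    (hxfin : HasFiniteVar p x 0 T) (hxsfin : HasFiniteVar p xs 0 T)
    (h0 : x 0 = xs 0) :
    ∀ u v : ℝ, 0 ≤ u → u ≤ v → v ≤ T →
      ‖f (x v) - f (x u) - f (xs v) + f (xs u)‖ ≤
        L * (pVar p (fun t => x t - xs t) u v +
          2 * pVar p xs u v * pVar p (fun t => x t - xs t) 0 T) := by
  intro u v hu huv hvT
  set y : ℝ → EuclideanSpace ℝ (Fin e) := fun t => x t - xs t with hy
  have hyfinT : HasFiniteVar p y 0 T := hasFiniteVar_sub hp hxfin hxsfin
  have hyfinuv : HasFiniteVar p y u v := hasFiniteVar_mono hp y hu huv hvT hyfinT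
  have hxsfinuv : HasFiniteVar p xs u v := hasFiniteVar_mono hp xs hu huv hvT hxsfin
  have P1 : ‖y v - y u‖ ≤ pVar p y u v := norm_sub_le_pVar hp y le_rfl huv le_rfl hyfinuv
  have P2 : ‖xs v - xs u‖ ≤ pVar p xs u v := norm_sub_le_pVar hp xs le_rfl huv le_rfl hxsfinuv
  have P3 : ‖y u - y 0‖ ≤ pVar p y 0 T :=
    norm_sub_le_pVar hp y le_rfl hu (le_trans huv hvT) hyfinT
  have hy0 : y 0 = 0 := by simp [hy, h0]
  set c : EuclideanSpace ℝ (Fin e) := xs v - xs u with hc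
  have hxsc : xs u + c = xs v := by rw [hc]; abel
  have hdecomp : f (x v) - f (x u) - f (xs v) + f (xs u)
      = (f (x v) - f (x u + c)) + ((f (x u + c) - f (x u)) - (f (xs u + c) - f (xs u))) := by
    rw [hxsc]; abel
  have heq : x v - (x u + c) = y v - y u := by
    simp only [hy, hc]; abel
  have hA : ‖f (x v) - f (x u + c)‖ ≤ L * ‖y v - y u‖ := by
    calc ‖f (x v) - f (x u + c)‖ ≤ L * ‖x v - (x u + c)‖ := hflip _ _
      _ = L * ‖y v - y u‖ := by rw [heq]
  have hxuxsu : x u - xs u = y u - y 0 := by rw [hy0]; simp [hy]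
  have hB : ‖(f (x u + c) - f (x u)) - (f (xs u + c) - f (xs u))‖
      ≤ (L * ‖c‖) * ‖y u - y 0‖ := by
    have := diff_translate_bound f hf hDflip c (x u) (xs u)
    rwa [hxuxsu] at this
  have htri : ‖f (x v) - f (x u) - f (xs v) + f (xs u)‖
      ≤ L * ‖y v - y u‖ + (L * ‖c‖) * ‖y u - y 0‖ := by
    rw [hdecomp]
    exact (norm_add_le _ _).trans (add_le_add hA hB)
  have hprod : ‖c‖ * ‖y u - y 0‖ ≤ pVar p xs u v * pVar p y 0 T := by
    have hcn : ‖c‖ ≤ pVar p xs u v := by rw [hc]; exact P2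
    exact mul_le_mul hcn P3 (norm_nonneg _) (pVar_nonneg _ _ _ _)
  have h1 : L * ‖y v - y u‖ ≤ L * pVar p y u v := mul_le_mul_of_nonneg_left P1 hL
  have h2 : (L * ‖c‖) * ‖y u - y 0‖ ≤ L * (pVar p xs u v * pVar p y 0 T) := by
    rw [mul_assoc]
    exact mul_le_mul_of_nonneg_left hprod hL
  have h3 : 0 ≤ L * (pVar p xs u v * pVar p y 0 T) :=
    mul_nonneg hL (mul_nonneg (pVar_nonneg _ _ _ _) (pVar_nonneg _ _ _ _))
  have hring : L * (pVar p y u v + 2 * pVar p xs u v * pVar p y 0 T)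
      = L * pVar p y u v + 2 * (L * (pVar p xs u v * pVar p y 0 T)) := by ring
  rw [hring]
  linarith [htri, h1, h2, h3]
end
end

section
/- Let C : [0,T] ⇉ ℝ^e be compact convex valued. Fix n ∈ ℕ*, a ∈ C(0), an ℝ^e-valued function H^n on [0,T], and define Y^n(t_k^n) recursively by Y^n(t_0^n) = a - H^n applied appropriately and Y^n(t_{k}^n) = p_{C(t_k^n) - H^n(t_k^n)}(Y^n(t_{k-1}^n)). Then for every 0 ≤ s < t ≤ T and every z ∈ ⋂_{τ∈[s,t]} (C(τ) - H^n(τ)), ⟨z, Y^n(t) - Y^n(s)⟩ ≥ (‖Y^n(t)‖² - ‖Y^n(s)‖²)/2, where Y^n is the piecewise-constant interpolation Y^n(t) := Y^n(t_k^n) for t ∈ [t_k^n, t_{k+1}^n). -/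
noncomputable section

set_option maxHeartbeats 1000000

open Classical in
/-- The metric projection onto a set `C` (via choice; `x` itself if no closest
point exists). -/
def metricProj {e : ℕ} (C : Set (EuclideanSpace ℝ (Fin e)))
    (x : EuclideanSpace ℝ (Fin e)) : EuclideanSpace ℝ (Fin e) :=
  if h : ∃ y ∈ C, ∀ z ∈ C, dist x y ≤ dist x z then h.choose else x

lemma metricProj_spec {e : ℕ} {C : Set (EuclideanSpace ℝ (Fin e))}
    (hne : C.Nonempty) (hcomp : IsCompact C) (hconv : Convex ℝ C)
    (x : EuclideanSpace ℝ (Fin e)) :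
    metricProj C x ∈ C ∧
      ∀ y ∈ C, (inner ℝ (x - metricProj C x) (y - metricProj C x) : ℝ) ≤ 0 := by
  have hex : ∃ y ∈ C, ∀ z ∈ C, dist x y ≤ dist x z := by
    obtain ⟨y, hy, hyd⟩ := hcomp.exists_infDist_eq_dist hne x
    exact ⟨y, hy, fun w hw => hyd ▸ Metric.infDist_le_dist_of_mem hw⟩
  rw [metricProj, dif_pos hex]
  obtain ⟨hmem, hmin⟩ := hex.choose_spec
  refine ⟨hmem, ?_⟩
  set p := hex.choose
  haveI : Nonempty C := ⟨⟨p, hmem⟩⟩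
  have hinf : ‖x - p‖ = ⨅ w : C, ‖x - (w : EuclideanSpace ℝ (Fin e))‖ := by
    apply le_antisymm
    · exact le_ciInf fun w => by simpa [dist_eq_norm] using hmin w w.2
    · exact ciInf_le ⟨0, by rintro r ⟨w, rfl⟩; exact norm_nonneg _⟩ (⟨p, hmem⟩ : C)
  exact fun y hy => ((norm_eq_iInf_iff_real_inner_le_zero hconv hmem).mp hinf) y hy

lemma step_ineq {e : ℕ} {z a b : EuclideanSpace ℝ (Fin e)}
    (h : (inner ℝ (b - a) (z - a) : ℝ) ≤ 0) :
    (‖a‖ ^ 2 - ‖b‖ ^ 2) / 2 ≤ (inner ℝ z (a - b) : ℝ) := by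
  have hab : (0 : ℝ) ≤ inner ℝ (a - b) (a - b) := real_inner_self_nonneg
  have ea : ‖a‖ ^ 2 = (inner ℝ a a : ℝ) := (real_inner_self_eq_norm_sq a).symm
  have eb : ‖b‖ ^ 2 = (inner ℝ b b : ℝ) := (real_inner_self_eq_norm_sq b).symm
  simp only [inner_sub_left, inner_sub_right] at h hab ⊢
  have h1 := real_inner_comm a b
  have h2 := real_inner_comm a z
  have h3 := real_inner_comm b z
  linarith

theorem discrete_scheme_variational_inequality
    (e : ℕ) (T : ℝ) (hT : 0 < T) (n : ℕ) (hn : 0 < n)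
    (C : ℝ → Set (EuclideanSpace ℝ (Fin e)))
    (hC : ∀ t ∈ Set.Icc (0 : ℝ) T,
      (C t).Nonempty ∧ IsCompact (C t) ∧ Convex ℝ (C t))
    (a : EuclideanSpace ℝ (Fin e)) (ha : a ∈ C 0)
    (Hn : ℝ → EuclideanSpace ℝ (Fin e))
    (Yd : ℕ → EuclideanSpace ℝ (Fin e))
    (hY0 : Yd 0 = a - Hn 0)
    (hYrec : ∀ k : ℕ, 1 ≤ k → k ≤ n →
      Yd k = metricProj ((fun c => c - Hn (k * T / n)) '' C (k * T / n)) (Yd (k - 1)))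
    (Y : ℝ → EuclideanSpace ℝ (Fin e))
    (hYstep : ∀ k : ℕ, k < n → ∀ t ∈ Set.Ico ((k : ℝ) * T / n) (((k : ℝ) + 1) * T / n),
      Y t = Yd k)
    (hYT : Y T = Yd n) :
    ∀ s t : ℝ, 0 ≤ s → s < t → t ≤ T →
      ∀ z : EuclideanSpace ℝ (Fin e),
        (∀ τ ∈ Set.Icc s t, z ∈ (fun c => c - Hn τ) '' C τ) →
          (‖Y t‖ ^ 2 - ‖Y s‖ ^ 2) / 2 ≤ (inner ℝ z (Y t - Y s) : ℝ) := by
  intro s t hs hst htT z hz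
  have hn0 : (0 : ℝ) < n := by exact_mod_cast hn
  have hsT : s < T := lt_of_lt_of_le hst htT
  have ht0 : 0 ≤ t := le_of_lt (lt_of_le_of_lt hs hst)
  -- index for s
  set ks := ⌊s * n / T⌋₊ with hksdef
  have h1 : (ks : ℝ) ≤ s * n / T := Nat.floor_le (by positivity)
  have h2 : s * n / T < ks + 1 := Nat.lt_floor_add_one _
  have hksn : ks < n := by
    have hlt : s * n / T < n := by rw [div_lt_iff₀ hT]; nlinarith
    exact (Nat.floor_lt (by positivity)).mpr hlt
  have hsl : (ks : ℝ) * T / n ≤ s := by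
    rw [div_le_iff₀ hn0]
    rw [le_div_iff₀ hT] at h1
    nlinarith
  have hsu : s < ((ks : ℝ) + 1) * T / n := by
    rw [lt_div_iff₀ hn0]
    rw [div_lt_iff₀ hT] at h2
    nlinarith
  have hYs : Y s = Yd ks := hYstep ks hksn s ⟨hsl, hsu⟩
  -- index for t
  obtain ⟨kt, hktn, hYt, hktt, hkskt⟩ :
      ∃ kt, kt ≤ n ∧ Y t = Yd kt ∧ (kt : ℝ) * T / n ≤ t ∧ ks ≤ kt := by
    rcases eq_or_lt_of_le htT with rfl | htT'
    · refine ⟨n, le_rfl, hYT, le_of_eq ?_, le_of_lt hksn⟩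
      field_simp
    · have htn0 : 0 ≤ t * n / T := div_nonneg (mul_nonneg ht0 hn0.le) hT.le
      have ht1 : (⌊t * n / T⌋₊ : ℝ) ≤ t * n / T := Nat.floor_le htn0
      have ht2 : t * n / T < ⌊t * n / T⌋₊ + 1 := Nat.lt_floor_add_one _
      have hktn' : ⌊t * n / T⌋₊ < n := by
        have hlt : t * n / T < n := by rw [div_lt_iff₀ hT]; nlinarith
        exact (Nat.floor_lt htn0).mpr hlt
      have htl : (⌊t * n / T⌋₊ : ℝ) * T / n ≤ t := by
        rw [div_le_iff₀ hn0]
        rw [le_div_iff₀ hT] at ht1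
        nlinarith
      have htu : t < ((⌊t * n / T⌋₊ : ℝ) + 1) * T / n := by
        rw [lt_div_iff₀ hn0]
        rw [div_lt_iff₀ hT] at ht2
        nlinarith
      refine ⟨⌊t * n / T⌋₊, le_of_lt hktn', hYstep _ hktn' t ⟨htl, htu⟩, htl, ?_⟩
      apply Nat.floor_mono
      gcongr
  -- main induction
  have key : ∀ j, ks ≤ j → j ≤ kt →
      (‖Yd j‖ ^ 2 - ‖Yd ks‖ ^ 2) / 2 ≤ (inner ℝ z (Yd j - Yd ks) : ℝ) := by
    intro j
    induction j with
    | zero =>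
      intro hj1 _
      have hks0 : ks = 0 := Nat.le_zero.mp hj1
      rw [hks0]
      simp
    | succ j ih =>
      intro hj1 hj2
      rcases Nat.lt_or_ge ks (j + 1) with hlt | hge
      · have hksj : ks ≤ j := Nat.lt_succ_iff.mp hlt
        have IH := ih hksj (Nat.le_of_succ_le hj2)
        -- the projection step at k = j+1
        set τ : ℝ := (↑(j + 1) : ℝ) * T / n with hτdef
        have hjk : ((ks : ℝ) + 1) ≤ (↑(j + 1) : ℝ) := by
          push_cast
          have : (ks : ℝ) ≤ (j : ℝ) := by exact_mod_cast hksj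
          linarith
        have hsτ : s < τ := lt_of_lt_of_le hsu (by rw [hτdef]; gcongr)
        have hjkt : (↑(j + 1) : ℝ) ≤ (kt : ℝ) := by exact_mod_cast hj2
        have hτt : τ ≤ t := le_trans (by rw [hτdef]; gcongr) hktt
        have hτIcc : τ ∈ Set.Icc (0 : ℝ) T :=
          ⟨le_trans hs (le_of_lt hsτ), le_trans hτt htT⟩
        obtain ⟨hCne, hCcomp, hCconv⟩ := hC τ hτIcc
        set S := (fun c => c - Hn τ) '' C τ with hSdef
        have hSne : S.Nonempty := hCne.image _
        have hScomp : IsCompact S := hCcomp.image (continuous_id.sub continuous_const)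
        have hSconv : Convex ℝ S := by
          rintro x ⟨c1, hc1, rfl⟩ y ⟨c2, hc2, rfl⟩ α β hα hβ hαβ
          refine ⟨α • c1 + β • c2, hCconv hc1 hc2 hα hβ hαβ, ?_⟩
          simp only [smul_sub]
          rw [show α • c1 - α • Hn τ + (β • c2 - β • Hn τ)
              = α • c1 + β • c2 - (α + β) • Hn τ by module, hαβ, one_smul]
        have hrec : Yd (j + 1) = metricProj S (Yd j) := by
          have := hYrec (j + 1) (Nat.le_add_left 1 j) (le_trans hj2 hktn)
          simpa [hSdef, hτdef] using this
        have hzS : z ∈ S := hz τ ⟨le_of_lt hsτ, hτt⟩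
        obtain ⟨hpmem, hpineq⟩ := metricProj_spec hSne hScomp hSconv (Yd j)
        have hstep := step_ineq (z := z) (a := Yd (j + 1)) (b := Yd j)
          (by rw [hrec]; exact hpineq z hzS)
        have hsplit : (inner ℝ z (Yd (j + 1) - Yd ks) : ℝ)
            = inner ℝ z (Yd (j + 1) - Yd j) + (inner ℝ z (Yd j - Yd ks) : ℝ) := by
          rw [← inner_add_right, sub_add_sub_cancel]
        rw [hsplit]
        linarith
      · have hkseq : ks = j + 1 := le_antisymm hj1 hge
        rw [hkseq]
        simp
  rw [hYt, hYs]
  exact key kt hkskt le_rfl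
end
end
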